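/- Let C be a symmetric monoidal category with equalisers, H a Hopf monoid in C, and δ_1,…,δ_m: M → H⊗M pairwise commuting H-comodule structures on an object M, meaning (1_H⊗δ_j)∘δ_i = (τ_{H,H}⊗1_M)∘(1_H⊗δ_i)∘δ_j for i ≠ j. For a nonempty subset ℱ = {i_1,…,i_k} ⊆ {1,…,m} let δ_ℱ: M → H^{⊗k}⊗M denote the composite (1_{H^{⊗(k-1)}}⊗δ_{i_k})∘…∘(1_H⊗δ_{i_2})∘δ_{i_1}, which is an H^{⊗k}-comodule structure, and let ι_ℱ: M^{coℱ} → M denote the equaliser of δ_ℱ and η^{⊗k}⊗1_M. Then for every nonempty subset ℱ' ⊆ ℱ (with |ℱ'| = k') one has δ_{ℱ'}∘ι_ℱ = (η^{⊗k'}⊗1_M)∘ι_ℱ, and there is a unique morphism ξ: M^{coℱ} → M^{coℱ'} with ι_{ℱ'}∘ξ = ι_ℱ; moreover ξ is a monomorphism. -/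

import Mathlib

open CategoryTheory MonoidalCategory Limits

namespace Stmt5

variable {C : Type*} [Category C] [MonoidalCategory C]

/-- The `n`-fold tensor power `H^{⊗n}` (right-nested). -/
def tensorPow (H : C) : ℕ → C
  | 0 => 𝟙_ C
  | n + 1 => H ⊗ tensorPow H n

/-- The iterated coaction `(1_{H^{⊗(k-1)}} ⊗ δ_{i_k}) ∘ … ∘ (1_H ⊗ δ_{i₂}) ∘ δ_{i₁}` of
`H^{⊗k}` on `M` determined by a list `[i₁, …, i_k]` of indices. -/
def coactList {H M : C} {ι : Type*} (d : ι → (M ⟶ H ⊗ M)) :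
    (l : List ι) → (M ⟶ tensorPow H l.length ⊗ M)
  | [] => (λ_ M).inv
  | i :: l => d i ≫ (H ◁ coactList d l) ≫ (α_ H (tensorPow H l.length) M).inv

/-- The iterated unit `η^{⊗n} : 𝟙 ⟶ H^{⊗n}`. -/
def unitPow {H : C} (η : 𝟙_ C ⟶ H) : (n : ℕ) → (𝟙_ C ⟶ tensorPow H n)
  | 0 => 𝟙 _
  | n + 1 => (λ_ (𝟙_ C)).inv ≫ (η ⊗ₘ unitPow η n)

lemma collapse_head {H M : C} {ι : Type*} (d : ι → (M ⟶ H ⊗ M))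
    (ε : H ⟶ 𝟙_ C) (hc : ∀ i, d i ≫ (ε ▷ M) = (λ_ M).inv) (i : ι) (l : List ι) :
    coactList d (i :: l) ≫
      (((ε ▷ tensorPow H l.length) ≫ (λ_ _).hom) ▷ M) = coactList d l := by
  dsimp only [coactList, List.length_cons, tensorPow]
  simp only [coactList, List.length_cons, Category.assoc, comp_whiskerRight]
  rw [← associator_inv_naturality_left_assoc, whisker_exchange_assoc,
    reassoc_of% (hc i), ← leftUnitor_inv_naturality_assoc,
    leftUnitor_tensor_inv_assoc]
  simp

lemma aux_proj {H M : C} {ι : Type*} (d : ι → (M ⟶ H ⊗ M))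
    (ε : H ⟶ 𝟙_ C) (η : 𝟙_ C ⟶ H)
    (hc : ∀ i, d i ≫ (ε ▷ M) = (λ_ M).inv)
    (hηε : η ≫ ε = 𝟙 _)
    {l' l : List ι} (h : l'.Sublist l) :
    ∃ p : tensorPow H l.length ⟶ tensorPow H l'.length,
      coactList d l ≫ (p ▷ M) = coactList d l' ∧
      unitPow η l.length ≫ p = unitPow η l'.length := by
  induction h with
  | slnil => exact ⟨𝟙 _, by simp [coactList]; exact Category.comp_id _, by simp⟩
  | cons i h ih =>
      obtain ⟨p, hp1, hp2⟩ := ih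
      refine ⟨(ε ▷ _) ≫ (λ_ _).hom ≫ p, ?_, ?_⟩
      · rw [← hp1]
        refine Eq.trans ?_ (congrArg (· ≫ p ▷ M) (collapse_head d ε hc i _))
        exact (congrArg (fun x => coactList d _ ≫ x ▷ M) (Category.assoc _ _ _).symm).trans
          ((congrArg (coactList d _ ≫ ·) (comp_whiskerRight _ _ M)).trans (Category.assoc _ _ _).symm)
      · dsimp only [unitPow, List.length_cons, tensorPow]
        simp only [unitPow, List.length_cons, Category.assoc,
          ← tensorHom_id, tensorHom_comp_tensorHom_assoc, hηε, Category.comp_id,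
          Category.id_comp]
        rw [id_tensorHom, leftUnitor_naturality_assoc, hp2]
        simp
  | cons_cons i h ih =>
      obtain ⟨p, hp1, hp2⟩ := ih
      refine ⟨H ◁ p, ?_, ?_⟩
      · dsimp only [coactList, List.length_cons, tensorPow]
        simp only [coactList, List.length_cons, Category.assoc]
        rw [← associator_inv_naturality_middle,
          ← MonoidalCategory.whiskerLeft_comp_assoc, hp1]
      · dsimp only [unitPow, List.length_cons, tensorPow]
        simp only [unitPow, List.length_cons, Category.assoc,
          ← id_tensorHom, tensorHom_comp_tensorHom, hp2, Category.comp_id]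

end Stmt5

open Stmt5

/-- Let `C` be a symmetric monoidal category with equalisers, `H` a Hopf
monoid in `C` and `(δ_i)` pairwise commuting `H`-comodule structures on `M`.  For a nonempty
subset `ℱ` (encoded as a duplicate-free list `l`) let `δ_ℱ` be the iterated coaction of
`H^{⊗|ℱ|}` and `ι_ℱ : M^{coℱ} → M` the equaliser of `δ_ℱ` and `η^{⊗|ℱ|} ⊗ 1_M`.  Then for
every nonempty subset `ℱ' ⊆ ℱ` (encoded as a sublist `l'` of `l`) one has
`δ_{ℱ'} ∘ ι_ℱ = (η^{⊗|ℱ'|} ⊗ 1_M) ∘ ι_ℱ`, there is a unique morphism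
`ξ : M^{coℱ} → M^{coℱ'}` with `ι_{ℱ'} ∘ ξ = ι_ℱ`, and `ξ` is a monomorphism. -/
theorem equalisers_of_commuting_comodule_structures
    {C : Type*} [Category C] [MonoidalCategory C] [SymmetricCategory C]
    [HasEqualizers C] (H : Hopf C) {ι : Type*} {M : C}
    (d : ι → (M ⟶ H.X ⊗ M))
    (hd_coassoc : ∀ i, d i ≫ (ComonObj.comul (X := H.X) ▷ M) =
      d i ≫ (H.X ◁ d i) ≫ (α_ H.X H.X M).inv)
    (hd_counit : ∀ i, d i ≫ (ComonObj.counit (X := H.X) ▷ M) ≫ (λ_ M).hom = 𝟙 M)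
    (hcomm : ∀ i j, i ≠ j →
      d i ≫ (H.X ◁ d j) =
        d j ≫ (H.X ◁ d i) ≫ (α_ H.X H.X M).inv ≫
          ((β_ H.X H.X).hom ▷ M) ≫ (α_ H.X H.X M).hom)
    (l l' : List ι) (hl : l.Nodup) (hsub : List.Sublist l' l) (hl' : l' ≠ []) :
    (equalizer.ι (coactList d l)
        ((λ_ M).inv ≫ (unitPow (MonObj.one (X := H.X)) l.length ▷ M)) ≫ coactList d l' =
      equalizer.ι (coactList d l)
        ((λ_ M).inv ≫ (unitPow (MonObj.one (X := H.X)) l.length ▷ M)) ≫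
          ((λ_ M).inv ≫ (unitPow (MonObj.one (X := H.X)) l'.length ▷ M))) ∧
    (∃! ξ : equalizer (coactList d l)
          ((λ_ M).inv ≫ (unitPow (MonObj.one (X := H.X)) l.length ▷ M)) ⟶
        equalizer (coactList d l')
          ((λ_ M).inv ≫ (unitPow (MonObj.one (X := H.X)) l'.length ▷ M)),
      ξ ≫ equalizer.ι (coactList d l')
          ((λ_ M).inv ≫ (unitPow (MonObj.one (X := H.X)) l'.length ▷ M)) =
        equalizer.ι (coactList d l)
          ((λ_ M).inv ≫ (unitPow (MonObj.one (X := H.X)) l.length ▷ M))) ∧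
    (∀ ξ : equalizer (coactList d l)
          ((λ_ M).inv ≫ (unitPow (MonObj.one (X := H.X)) l.length ▷ M)) ⟶
        equalizer (coactList d l')
          ((λ_ M).inv ≫ (unitPow (MonObj.one (X := H.X)) l'.length ▷ M)),
      ξ ≫ equalizer.ι (coactList d l')
          ((λ_ M).inv ≫ (unitPow (MonObj.one (X := H.X)) l'.length ▷ M)) =
        equalizer.ι (coactList d l)
          ((λ_ M).inv ≫ (unitPow (MonObj.one (X := H.X)) l.length ▷ M)) → Mono ξ) := by
  have hc : ∀ i, d i ≫ (ComonObj.counit (X := H.X) ▷ M) = (λ_ M).inv := fun i => by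
    have := hd_counit i
    rw [← Category.assoc] at this
    exact (Iso.comp_hom_eq_id (λ_ M)).mp this
  have hηε : MonObj.one (X := H.X) ≫ ComonObj.counit (X := H.X) = 𝟙 (𝟙_ C) := by
    exact BimonObj.one_counit H.X

  obtain ⟨p, hp1, hp2⟩ := aux_proj d (ComonObj.counit (X := H.X)) (MonObj.one (X := H.X)) hc hηε hsub
  have key : equalizer.ι (coactList d l)
        ((λ_ M).inv ≫ (unitPow (MonObj.one (X := H.X)) l.length ▷ M)) ≫ coactList d l' =
      equalizer.ι (coactList d l)
        ((λ_ M).inv ≫ (unitPow (MonObj.one (X := H.X)) l.length ▷ M)) ≫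
          ((λ_ M).inv ≫ (unitPow (MonObj.one (X := H.X)) l'.length ▷ M)) := by
    rw [← hp1, ← Category.assoc, equalizer.condition, ← hp2]
    simp
  refine ⟨key, ⟨equalizer.lift _ key, equalizer.lift_ι _ _, fun y hy => ?_⟩, fun ξ hξ => ?_⟩
  · rw [← cancel_mono (equalizer.ι (coactList d l')
      ((λ_ M).inv ≫ (unitPow (MonObj.one (X := H.X)) l'.length ▷ M))), hy, equalizer.lift_ι]
  · haveI : Mono (ξ ≫ equalizer.ι (coactList d l')
      ((λ_ M).inv ≫ (unitPow (MonObj.one (X := H.X)) l'.length ▷ M))) := hξ ▸ inferInstance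
    exact mono_of_mono ξ (equalizer.ι (coactList d l')
      ((λ_ M).inv ≫ (unitPow (MonObj.one (X := H.X)) l'.length ▷ M)))
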